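/- A nonnegative 2×2×2 tensor P has nonnegative rank at most 2 if and only if P is supermodular, i.e. for some choice of permutations π_1, π_2, π_3 of {1,2}, the relabeled tensor [p_{π_1(i) π_2(j) π_3(k)}] satisfies the nine inequalities p_{111}p_{222} ≥ p_{112}p_{221}, p_{111}p_{222} ≥ p_{121}p_{212}, p_{111}p_{222} ≥ p_{211}p_{122}, p_{112}p_{222} ≥ p_{122}p_{212}, p_{121}p_{222} ≥ p_{122}p_{221}, p_{211}p_{222} ≥ p_{212}p_{221}, p_{111}p_{122} ≥ p_{112}p_{121}, p_{111}p_{212} ≥ p_{112}p_{211}, p_{111}p_{221} ≥ p_{121}p_{211} (applied to its entries). -/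

import Mathlib

/-- The nine supermodularity inequalities for a 2×2×2 tensor
(indices 0,1 correspond to the paper's 1,2). -/
def Supermod9 (Q : Fin 2 → Fin 2 → Fin 2 → ℝ) : Prop :=
  Q 0 0 0 * Q 1 1 1 ≥ Q 0 0 1 * Q 1 1 0 ∧
  Q 0 0 0 * Q 1 1 1 ≥ Q 0 1 0 * Q 1 0 1 ∧
  Q 0 0 0 * Q 1 1 1 ≥ Q 1 0 0 * Q 0 1 1 ∧
  Q 0 0 1 * Q 1 1 1 ≥ Q 0 1 1 * Q 1 0 1 ∧
  Q 0 1 0 * Q 1 1 1 ≥ Q 0 1 1 * Q 1 1 0 ∧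
  Q 1 0 0 * Q 1 1 1 ≥ Q 1 0 1 * Q 1 1 0 ∧
  Q 0 0 0 * Q 0 1 1 ≥ Q 0 0 1 * Q 0 1 0 ∧
  Q 0 0 0 * Q 1 0 1 ≥ Q 0 0 1 * Q 1 0 0 ∧
  Q 0 0 0 * Q 1 1 0 ≥ Q 0 1 0 * Q 1 0 0

/-- Nonnegative rank at most 2 for a 2×2×2 tensor. -/
def NNRank2 (P : Fin 2 → Fin 2 → Fin 2 → ℝ) : Prop :=
  ∃ a1 a2 a3 b1 b2 b3 : Fin 2 → ℝ,
    (∀ i, 0 ≤ a1 i) ∧ (∀ i, 0 ≤ a2 i) ∧ (∀ i, 0 ≤ a3 i) ∧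
    (∀ i, 0 ≤ b1 i) ∧ (∀ i, 0 ≤ b2 i) ∧ (∀ i, 0 ≤ b3 i) ∧
    ∀ i j k, P i j k = a1 i * a2 j * a3 k + b1 i * b2 j * b3 k

private lemma branch (D dA m r x y : ℝ) (hD : 0 < D) (hx : 0 ≤ x) (hy : 0 ≤ y)
    (hmr : r ≤ m) (hr : 0 ≤ r) (hr2 : r^2 = m^2 - 4*dA*D)
    (hq : D*x^2 - m*x*y + dA*y^2 ≤ 0) :
    0 ≤ 2*D*x - (m-r)*y ∧ 0 ≤ (m+r)*y - 2*D*x := by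
  have hq4 : 4*D*(D*x^2 - m*x*y + dA*y^2) ≤ 0 := by nlinarith
  have hry : r^2*y^2 = (m^2 - 4*dA*D)*y^2 := by rw [hr2]
  constructor
  · by_contra hc
    push_neg at hc
    have h1 : 0 < (m-r)*y - 2*D*x := by linarith
    have h2 : 0 < (m+r)*y - 2*D*x := by nlinarith [mul_nonneg hr hy]
    nlinarith [mul_pos h1 h2]
  · by_contra hc
    push_neg at hc
    have h1 : 0 < 2*D*x - (m+r)*y := by linarith
    have h2 : 0 < 2*D*x - (m-r)*y := by nlinarith [mul_nonneg hr hy]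
    nlinarith [mul_pos h1 h2]

private lemma branch_eq (D dA m x y : ℝ) (hD : 0 < D)
    (hm2 : m^2 = 4*dA*D) (hq : D*x^2 - m*x*y + dA*y^2 ≤ 0) :
    2*D*x = m*y := by
  have hq4 : 4*D*(D*x^2 - m*x*y + dA*y^2) ≤ 0 := by nlinarith
  have hy2 : m^2*y^2 = 4*dA*D*y^2 := by rw [hm2]
  have hsq : (2*D*x - m*y)^2 ≤ 0 := by nlinarith
  have h0 : (2*D*x - m*y)^2 = 0 := le_antisymm hsq (sq_nonneg _)
  have := pow_eq_zero_iff (n := 2) (by norm_num) |>.mp h0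
  linarith

private lemma outer_of_det0 (M : Fin 2 → Fin 2 → ℝ) (hnn : ∀ j k, 0 ≤ M j k)
    (hdet : M 0 0 * M 1 1 = M 0 1 * M 1 0) :
    ∃ p q : Fin 2 → ℝ, (∀ j, 0 ≤ p j) ∧ (∀ k, 0 ≤ q k) ∧ ∀ j k, M j k = p j * q k := by
  rcases (hnn 0 0).lt_or_eq with h00 | h00
  · refine ⟨![M 0 0, M 1 0], ![1, M 0 1 / M 0 0], ?_, ?_, ?_⟩
    · intro j; fin_cases j <;> simp [hnn 0 0, hnn 1 0]
    · intro k
      fin_cases k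
      · norm_num
      · simpa using div_nonneg (hnn 0 1) (hnn 0 0)
    · intro j k
      fin_cases j <;> fin_cases k <;> simp
      · field_simp
      · field_simp
        linarith [hdet]
  · have hz : M 0 1 * M 1 0 = 0 := by rw [← hdet, ← h00]; ring
    rcases mul_eq_zero.mp hz with h01 | h10
    · refine ⟨![0, 1], fun k => M 1 k, ?_, ?_, ?_⟩
      · intro j; fin_cases j <;> norm_num
      · intro k; exact hnn 1 k
      · intro j k
        fin_cases j <;> fin_cases k <;> simp
        · exact h00.symm
        · exact h01
    · refine ⟨fun j => M j 1, ![0, 1], ?_, ?_, ?_⟩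
      · intro j; exact hnn j 1
      · intro k; fin_cases k <;> norm_num
      · intro j k
        fin_cases j <;> fin_cases k <;> simp
        · exact h00.symm
        · exact h10

private def T8 (a b c d e f g h : ℝ) : Fin 2 → Fin 2 → Fin 2 → ℝ := fun i j k =>
  if i = 0 then (if j = 0 then (if k = 0 then a else b) else (if k = 0 then c else d))
  else (if j = 0 then (if k = 0 then e else f) else (if k = 0 then g else h))

set_option maxHeartbeats 1000000 in
private lemma core8 (a b c d e f g h : ℝ)
    (na : 0 ≤ a) (nb : 0 ≤ b) (nc : 0 ≤ c) (nd : 0 ≤ d)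
    (ne' : 0 ≤ e) (nf : 0 ≤ f) (ng : 0 ≤ g) (nh : 0 ≤ h)
    (h1 : b*g ≤ a*h) (h2 : c*f ≤ a*h) (h3 : e*d ≤ a*h)
    (h4 : d*f ≤ b*h) (h5 : d*g ≤ c*h) (h6 : f*g ≤ e*h)
    (h7 : b*c ≤ a*d) (h8 : b*e ≤ a*f) (h9 : c*e ≤ a*g)
    (hB : 0 < e*h - f*g) :
    NNRank2 (T8 a b c d e f g h) := by
  have hD : (e*h - f*g) ≠ 0 := ne_of_gt hB
  have hdA : 0 ≤ a*d - b*c := by linarith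
  have hh : 0 < h := by
    rcases nh.eq_or_lt' with hh0 | hh0
    · nlinarith [mul_nonneg nf ng]
    · exact hh0
  have hm : 0 ≤ a*h + d*e - b*g - c*f := by
    rcases (mul_nonneg na nh).eq_or_lt' with hah | hah
    · have hde : 0 ≤ d*e := mul_nonneg nd ne'
      linarith
    · have hu : 0 ≤ (a*h - b*g)*(a*h - c*f) := mul_nonneg (by linarith) (by linarith)
      have hv : b*c*(f*g) ≤ a*d*(e*h) := mul_le_mul h7 h6 (mul_nonneg nf ng) (mul_nonneg na nd)
      nlinarith [hu, hv, hah]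
  have hΔ : 0 ≤ (a*h + d*e - b*g - c*f)^2 - 4*(a*d - b*c)*(e*h - f*g) := by
    have hv1 : 0 ≤ b*h - d*f := by linarith
    have hv2 : 0 ≤ c*h - d*g := by linarith
    nlinarith [sq_nonneg (2*(e*h-f*g)*d - (a*h + d*e - b*g - c*f)*h),
      mul_nonneg (mul_nonneg hB.le hv1) hv2, mul_pos hh hh]
  have hq00 : (e*h-f*g)*a^2 - (a*h + d*e - b*g - c*f)*a*e + (a*d - b*c)*e^2 ≤ 0 := by
    have key : (e*h-f*g)*a^2 - (a*h + d*e - b*g - c*f)*a*e + (a*d - b*c)*e^2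
        = -((a*f-b*e)*(a*g-c*e)) := by ring
    rw [key]
    exact neg_nonpos.2 (mul_nonneg (by linarith) (by linarith))
  have hq01 : (e*h-f*g)*b^2 - (a*h + d*e - b*g - c*f)*b*f + (a*d - b*c)*f^2 ≤ 0 := by
    have key : (e*h-f*g)*b^2 - (a*h + d*e - b*g - c*f)*b*f + (a*d - b*c)*f^2
        = -((a*f-b*e)*(b*h-d*f)) := by ring
    rw [key]
    exact neg_nonpos.2 (mul_nonneg (by linarith) (by linarith))
  have hq10 : (e*h-f*g)*c^2 - (a*h + d*e - b*g - c*f)*c*g + (a*d - b*c)*g^2 ≤ 0 := by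
    have key : (e*h-f*g)*c^2 - (a*h + d*e - b*g - c*f)*c*g + (a*d - b*c)*g^2
        = -((a*g-c*e)*(c*h-d*g)) := by ring
    rw [key]
    exact neg_nonpos.2 (mul_nonneg (by linarith) (by linarith))
  have hq11 : (e*h-f*g)*d^2 - (a*h + d*e - b*g - c*f)*d*h + (a*d - b*c)*h^2 ≤ 0 := by
    have key : (e*h-f*g)*d^2 - (a*h + d*e - b*g - c*f)*d*h + (a*d - b*c)*h^2
        = -((b*h-d*f)*(c*h-d*g)) := by ring
    rw [key]
    exact neg_nonpos.2 (mul_nonneg (by linarith) (by linarith))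
  set m := a*h + d*e - b*g - c*f with hmdef
  set r := Real.sqrt (m^2 - 4*(a*d - b*c)*(e*h - f*g)) with hrdef
  have hr0 : 0 ≤ r := Real.sqrt_nonneg _
  have hr2 : r^2 = m^2 - 4*(a*d - b*c)*(e*h - f*g) := Real.sq_sqrt hΔ
  have hmr : r ≤ m := by
    by_contra hcon
    push_neg at hcon
    nlinarith [mul_pos (sub_pos.2 hcon) (by linarith : (0:ℝ) < r + m),
      mul_nonneg hdA hB.le]
  rcases hr0.eq_or_lt' with hr | hr
  · -- r = 0 : the two slices are proportional
    have hm2 : m^2 = 4*(a*d - b*c)*(e*h - f*g) := by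
      rw [hr] at hr2; norm_num at hr2; linarith [hr2]
    have e00 : 2*(e*h-f*g)*a = m*e := branch_eq _ _ _ a e hB hm2 hq00
    have e01 : 2*(e*h-f*g)*b = m*f := branch_eq _ _ _ b f hB hm2 hq01
    have e10 : 2*(e*h-f*g)*c = m*g := branch_eq _ _ _ c g hB hm2 hq10
    have e11 : 2*(e*h-f*g)*d = m*h := branch_eq _ _ _ d h hB hm2 hq11
    refine ⟨![m, 2*(e*h-f*g)], ![1, 0], ![e/(2*(e*h-f*g)), f/(2*(e*h-f*g))],
           ![m, 2*(e*h-f*g)], ![0, 1], ![g/(2*(e*h-f*g)), h/(2*(e*h-f*g))],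
           ?_, ?_, ?_, ?_, ?_, ?_, ?_⟩
    · intro i; fin_cases i <;> simp <;> linarith
    · intro i; fin_cases i <;> norm_num
    · intro i; fin_cases i <;> simp <;>
        [exact div_nonneg ne' (by linarith); exact div_nonneg nf (by linarith)]
    · intro i; fin_cases i <;> simp <;> linarith
    · intro i; fin_cases i <;> norm_num
    · intro i; fin_cases i <;> simp <;>
        [exact div_nonneg ng (by linarith); exact div_nonneg nh (by linarith)]
    · intro i j k
      fin_cases i <;> fin_cases j <;> fin_cases k <;>
        simp [T8] <;> field_simp [show e*h - g*f ≠ 0 by intro h0; linarith, show h*e - f*g ≠ 0 by intro h0; linarith] <;> linarith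
  · -- r > 0
    have hrne : r ≠ 0 := ne_of_gt hr
    obtain ⟨hG00, hH00⟩ := branch _ _ _ _ a e hB na ne' hmr hr0 hr2 hq00
    obtain ⟨hG01, hH01⟩ := branch _ _ _ _ b f hB nb nf hmr hr0 hr2 hq01
    obtain ⟨hG10, hH10⟩ := branch _ _ _ _ c g hB nc ng hmr hr0 hr2 hq10
    obtain ⟨hG11, hH11⟩ := branch _ _ _ _ d h hB nd nh hmr hr0 hr2 hq11
    obtain ⟨pG, qG, hpG, hqG, hMG⟩ := outer_of_det0
      ![![2*(e*h-f*g)*a - (m-r)*e, 2*(e*h-f*g)*b - (m-r)*f],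
        ![2*(e*h-f*g)*c - (m-r)*g, 2*(e*h-f*g)*d - (m-r)*h]]
      (by intro j k; fin_cases j <;> fin_cases k <;> simp <;>
            linarith [hG00, hG01, hG10, hG11])
      (by simp only [Matrix.cons_val_zero, Matrix.cons_val_one, Matrix.head_cons]
          linear_combination (e*h-f*g)*hr2 + 2*(e*h-f*g)*(m-r)*hmdef)
    obtain ⟨pH, qH, hpH, hqH, hMH⟩ := outer_of_det0
      ![![(m+r)*e - 2*(e*h-f*g)*a, (m+r)*f - 2*(e*h-f*g)*b],
        ![(m+r)*g - 2*(e*h-f*g)*c, (m+r)*h - 2*(e*h-f*g)*d]]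
      (by intro j k; fin_cases j <;> fin_cases k <;> simp <;>
            linarith [hH00, hH01, hH10, hH11])
      (by simp only [Matrix.cons_val_zero, Matrix.cons_val_one, Matrix.head_cons]
          linear_combination (e*h-f*g)*hr2 + 2*(e*h-f*g)*(m+r)*hmdef)
    have g00 : 2*(e*h-f*g)*a - (m-r)*e = pG 0 * qG 0 := by simpa using hMG 0 0
    have g01 : 2*(e*h-f*g)*b - (m-r)*f = pG 0 * qG 1 := by simpa using hMG 0 1
    have g10 : 2*(e*h-f*g)*c - (m-r)*g = pG 1 * qG 0 := by simpa using hMG 1 0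
    have g11 : 2*(e*h-f*g)*d - (m-r)*h = pG 1 * qG 1 := by simpa using hMG 1 1
    have k00 : (m+r)*e - 2*(e*h-f*g)*a = pH 0 * qH 0 := by simpa using hMH 0 0
    have k01 : (m+r)*f - 2*(e*h-f*g)*b = pH 0 * qH 1 := by simpa using hMH 0 1
    have k10 : (m+r)*g - 2*(e*h-f*g)*c = pH 1 * qH 0 := by simpa using hMH 1 0
    have k11 : (m+r)*h - 2*(e*h-f*g)*d = pH 1 * qH 1 := by simpa using hMH 1 1
    refine ⟨![m+r, 2*(e*h-f*g)], pG, fun k => qG k / (4*r*(e*h-f*g)),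
           ![m-r, 2*(e*h-f*g)], pH, fun k => qH k / (4*r*(e*h-f*g)),
           ?_, hpG, ?_, ?_, hpH, ?_, ?_⟩
    · intro i; fin_cases i <;> simp <;> linarith
    · intro k; exact div_nonneg (hqG k) (by positivity)
    · intro i; fin_cases i <;> simp <;> linarith
    · intro k; exact div_nonneg (hqH k) (by positivity)
    · intro i j k
      fin_cases i <;> fin_cases j <;> fin_cases k <;> simp [T8] <;> field_simp
      · linear_combination (m+r)*g00 + (m-r)*k00
      · linear_combination (m+r)*g01 + (m-r)*k01
      · linear_combination (m+r)*g10 + (m-r)*k10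
      · linear_combination (m+r)*g11 + (m-r)*k11
      · linear_combination 2*g00 + 2*k00
      · linear_combination 2*g01 + 2*k01
      · rw [eq_div_iff (show e*h - g*f ≠ 0 by intro h0; linarith)]
        linear_combination 2*(e*h-f*g)*g10 + 2*(e*h-f*g)*k10
      · rw [eq_div_iff (show h*e - f*g ≠ 0 by intro h0; linarith)]
        linear_combination 2*(e*h-f*g)*g11 + 2*(e*h-f*g)*k11

/-- If both horizontal slices are (nonnegative) rank one, the tensor has nnrank ≤ 2. -/
private lemma slices_case (Q : Fin 2 → Fin 2 → Fin 2 → ℝ) (hnn : ∀ i j k, 0 ≤ Q i j k)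
    (hdA : Q 0 0 0 * Q 0 1 1 = Q 0 0 1 * Q 0 1 0)
    (hdB : Q 1 0 0 * Q 1 1 1 = Q 1 0 1 * Q 1 1 0) :
    NNRank2 Q := by
  obtain ⟨pA, qA, hpA, hqA, hA⟩ := outer_of_det0 (fun j k => Q 0 j k) (fun j k => hnn 0 j k) hdA
  obtain ⟨pB, qB, hpB, hqB, hB⟩ := outer_of_det0 (fun j k => Q 1 j k) (fun j k => hnn 1 j k) hdB
  refine ⟨![1, 0], pA, qA, ![0, 1], pB, qB, ?_, hpA, hqA, ?_, hpB, hqB, ?_⟩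
  · intro i; fin_cases i <;> norm_num
  · intro i; fin_cases i <;> norm_num
  · intro i j k
    fin_cases i <;> simp
    · exact hA j k
    · exact hB j k

private lemma nnrank2_flip (Q : Fin 2 → Fin 2 → Fin 2 → ℝ)
    (h : NNRank2 (fun i j k => Q (i+1) (j+1) (k+1))) : NNRank2 Q := by
  obtain ⟨a1, a2, a3, b1, b2, b3, n1, n2, n3, n4, n5, n6, hd⟩ := h
  refine ⟨fun i => a1 (i+1), fun j => a2 (j+1), fun k => a3 (k+1),
         fun i => b1 (i+1), fun j => b2 (j+1), fun k => b3 (k+1),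
         fun i => n1 _, fun j => n2 _, fun k => n3 _,
         fun i => n4 _, fun j => n5 _, fun k => n6 _, ?_⟩
  intro i j k
  have hh := hd (i+1) (j+1) (k+1)
  simp only [] at hh
  rw [show i+1+1 = i by fin_cases i <;> rfl, show j+1+1 = j by fin_cases j <;> rfl,
      show k+1+1 = k by fin_cases k <;> rfl] at hh
  exact hh

private lemma bwd (Q : Fin 2 → Fin 2 → Fin 2 → ℝ) (hnn : ∀ i j k, 0 ≤ Q i j k)
    (hs : Supermod9 Q) : NNRank2 Q := by
  obtain ⟨h1, h2, h3, h4, h5, h6, h7, h8, h9⟩ := hs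
  have hrw : Q = T8 (Q 0 0 0) (Q 0 0 1) (Q 0 1 0) (Q 0 1 1)
      (Q 1 0 0) (Q 1 0 1) (Q 1 1 0) (Q 1 1 1) := by
    funext i j k; fin_cases i <;> fin_cases j <;> fin_cases k <;> rfl
  have hdB : 0 ≤ Q 1 0 0 * Q 1 1 1 - Q 1 0 1 * Q 1 1 0 := by linarith
  rcases hdB.eq_or_lt' with hdB0 | hdB0
  · have hdA : 0 ≤ Q 0 0 0 * Q 0 1 1 - Q 0 0 1 * Q 0 1 0 := by linarith
    rcases hdA.eq_or_lt' with hdA0 | hdA0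
    · exact slices_case Q hnn (by linarith) (by linarith)
    · -- flip all three indices and use core8
      apply nnrank2_flip
      rw [show (fun i j k => Q (i+1) (j+1) (k+1)) = T8 (Q 1 1 1) (Q 1 1 0) (Q 1 0 1)
          (Q 1 0 0) (Q 0 1 1) (Q 0 1 0) (Q 0 0 1) (Q 0 0 0) from by
        funext i j k; fin_cases i <;> fin_cases j <;> fin_cases k <;> rfl]
      exact core8 _ _ _ _ _ _ _ _ (hnn 1 1 1) (hnn 1 1 0) (hnn 1 0 1) (hnn 1 0 0)
        (hnn 0 1 1) (hnn 0 1 0) (hnn 0 0 1) (hnn 0 0 0)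
        (by linarith) (by linarith) (by linarith) (by linarith) (by linarith)
        (by linarith) (by linarith) (by linarith) (by linarith) (by linarith)
  · rw [hrw]
    exact core8 _ _ _ _ _ _ _ _ (hnn 0 0 0) (hnn 0 0 1) (hnn 0 1 0) (hnn 0 1 1)
      (hnn 1 0 0) (hnn 1 0 1) (hnn 1 1 0) (hnn 1 1 1)
      (by linarith) (by linarith) (by linarith) (by linarith) (by linarith)
      (by linarith) (by linarith) (by linarith) (by linarith) (by linarith)

private lemma fwd_key (Q : Fin 2 → Fin 2 → Fin 2 → ℝ) (a b c d e f : Fin 2 → ℝ)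
    (ha : ∀ i, 0 ≤ a i) (hb : ∀ i, 0 ≤ b i) (hc : ∀ i, 0 ≤ c i)
    (hd : ∀ i, 0 ≤ d i) (he : ∀ i, 0 ≤ e i) (hf : ∀ i, 0 ≤ f i)
    (hab : a 1 * b 0 ≤ a 0 * b 1) (hcd : c 1 * d 0 ≤ c 0 * d 1)
    (hef : e 1 * f 0 ≤ e 0 * f 1)
    (hQ : ∀ i j k, Q i j k = a i * c j * e k + b i * d j * f k) :
    Supermod9 Q := by
  have hA : 0 ≤ a 0 * b 1 - a 1 * b 0 := by linarith
  have hC : 0 ≤ c 0 * d 1 - c 1 * d 0 := by linarith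
  have hE : 0 ≤ e 0 * f 1 - e 1 * f 0 := by linarith
  refine ⟨?_, ?_, ?_, ?_, ?_, ?_, ?_, ?_, ?_⟩ <;> simp only [hQ, ge_iff_le]
  · nlinarith [mul_nonneg hE (mul_nonneg hA (mul_nonneg (hc 0) (hd 1))),
      mul_nonneg hE (mul_nonneg (mul_nonneg (ha 1) (hb 0)) hC)]
  · nlinarith [mul_nonneg hC (mul_nonneg hA (mul_nonneg (he 0) (hf 1))),
      mul_nonneg hC (mul_nonneg (mul_nonneg (ha 1) (hb 0)) hE)]
  · nlinarith [mul_nonneg hA (mul_nonneg hC (mul_nonneg (he 0) (hf 1))),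
      mul_nonneg hA (mul_nonneg (mul_nonneg (hc 1) (hd 0)) hE)]
  · nlinarith [mul_nonneg (mul_nonneg (mul_nonneg (he 1) (hf 1)) hA) hC]
  · nlinarith [mul_nonneg (mul_nonneg (mul_nonneg (hc 1) (hd 1)) hA) hE]
  · nlinarith [mul_nonneg (mul_nonneg (mul_nonneg (ha 1) (hb 1)) hC) hE]
  · nlinarith [mul_nonneg (mul_nonneg (mul_nonneg (ha 0) (hb 0)) hC) hE]
  · nlinarith [mul_nonneg (mul_nonneg (mul_nonneg (hc 0) (hd 0)) hA) hE]
  · nlinarith [mul_nonneg (mul_nonneg (mul_nonneg (he 0) (hf 0)) hA) hC]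

private lemma orient (a b : Fin 2 → ℝ) :
    ∃ π : Equiv.Perm (Fin 2), a (π 1) * b (π 0) ≤ a (π 0) * b (π 1) := by
  rcases le_total (a 1 * b 0) (a 0 * b 1) with h | h
  · exact ⟨Equiv.refl _, by simpa using h⟩
  · refine ⟨Equiv.swap 0 1, ?_⟩
    simp only [Equiv.swap_apply_left, Equiv.swap_apply_right]
    linarith

/-- a nonnegative 2×2×2 tensor has nonnegative rank at most 2
iff it is supermodular for some relabeling of each index. -/
theorem stmt_11 (P : Fin 2 → Fin 2 → Fin 2 → ℝ)
    (hnn : ∀ i j k, 0 ≤ P i j k) :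
    NNRank2 P ↔
      ∃ π1 π2 π3 : Equiv.Perm (Fin 2),
        Supermod9 (fun i j k => P (π1 i) (π2 j) (π3 k)) := by
  constructor
  · rintro ⟨a1, a2, a3, b1, b2, b3, n1, n2, n3, n4, n5, n6, hd⟩
    obtain ⟨π1, h1⟩ := orient a1 b1
    obtain ⟨π2, h2⟩ := orient a2 b2
    obtain ⟨π3, h3⟩ := orient a3 b3
    refine ⟨π1, π2, π3, ?_⟩
    exact fwd_key _ (fun i => a1 (π1 i)) (fun i => b1 (π1 i)) (fun j => a2 (π2 j))
      (fun j => b2 (π2 j)) (fun k => a3 (π3 k)) (fun k => b3 (π3 k))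
      (fun i => n1 _) (fun i => n4 _) (fun j => n2 _) (fun j => n5 _)
      (fun k => n3 _) (fun k => n6 _) h1 h2 h3
      (fun i j k => hd (π1 i) (π2 j) (π3 k))
  · rintro ⟨π1, π2, π3, hsup⟩
    have hQ : NNRank2 (fun i j k => P (π1 i) (π2 j) (π3 k)) :=
      bwd _ (fun i j k => hnn _ _ _) hsup
    obtain ⟨a1, a2, a3, b1, b2, b3, n1, n2, n3, n4, n5, n6, hd⟩ := hQ
    refine ⟨fun i => a1 (π1.symm i), fun j => a2 (π2.symm j), fun k => a3 (π3.symm k),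
           fun i => b1 (π1.symm i), fun j => b2 (π2.symm j), fun k => b3 (π3.symm k),
           fun i => n1 _, fun j => n2 _, fun k => n3 _,
           fun i => n4 _, fun j => n5 _, fun k => n6 _, ?_⟩
    intro i j k
    have hh := hd (π1.symm i) (π2.symm j) (π3.symm k)
    simpa using hh
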